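/- Let n ≥ 2 and let G(x) = (∏_{i=1}^n x_i)^{1/n} be the geometric mean on (0,1)^n. Then the global orness value of G over [0,1]^n equals −1/(n−1) + ((n+1)/(n−1)) (n/(n+1))^n. -/

import Mathlib

open MeasureTheory Set

private lemma measurable_finset_inf' {ι : Type*} {s : Finset ι} (H : s.Nonempty) :
    Measurable fun x : ι → ℝ => s.inf' H x := by
  induction H using Finset.Nonempty.cons_induction with
  | singleton a => simp only [Finset.inf'_singleton]; exact measurable_pi_apply a
  | cons a s ha hne ih =>
    have h : (fun x : ι → ℝ => (Finset.cons a s ha).inf' (Finset.cons_nonempty ha) x)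
        = fun x : ι → ℝ => x a ⊓ s.inf' hne x := by
      funext x; exact Finset.inf'_cons (f := x) hne
    exact h ▸ (measurable_pi_apply a).inf ih

private lemma measurable_finset_sup' {ι : Type*} {s : Finset ι} (H : s.Nonempty) :
    Measurable fun x : ι → ℝ => s.sup' H x := by
  induction H using Finset.Nonempty.cons_induction with
  | singleton a => simp only [Finset.sup'_singleton]; exact measurable_pi_apply a
  | cons a s ha hne ih =>
    have h : (fun x : ι → ℝ => (Finset.cons a s ha).sup' (Finset.cons_nonempty ha) x)
        = fun x : ι → ℝ => x a ⊔ s.sup' hne x := by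
      funext x; exact Finset.sup'_cons (f := x) hne
    exact h ▸ (measurable_pi_apply a).sup ih

private lemma restrict_pi_eq (n : ℕ) :
    (volume : Measure (Fin n → ℝ)).restrict (Set.univ.pi fun _ => Ioo (0:ℝ) 1) =
      Measure.pi fun _ : Fin n => (volume : Measure ℝ).restrict (Ioo (0:ℝ) 1) := by
  refine (Measure.pi_eq fun s hs => ?_).symm
  rw [Measure.restrict_apply (MeasurableSet.univ_pi hs), ← Set.pi_inter_distrib,
    volume_pi_pi]
  exact Finset.prod_congr rfl fun i _ => (Measure.restrict_apply (hs i)).symm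

private lemma int_rpow (n : ℕ) (hn : 2 ≤ n) :
    ∫ y in Ioo (0:ℝ) 1, y ^ (1/(n:ℝ)) = (n:ℝ)/((n:ℝ)+1) := by
  have hn0 : (0:ℝ) < n := by exact_mod_cast Nat.lt_of_lt_of_le Nat.zero_lt_two hn
  have h1 : (-1:ℝ) < 1/(n:ℝ) := by
    have h0 : (0:ℝ) ≤ 1/(n:ℝ) := by positivity
    linarith
  rw [← integral_Ioc_eq_integral_Ioo, ← intervalIntegral.integral_of_le zero_le_one,
    integral_rpow (Or.inl h1)]
  rw [Real.one_rpow, Real.zero_rpow (by positivity)]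
  have hn' : (n:ℝ) ≠ 0 := hn0.ne'
  field_simp
  ring

private lemma geo_int (n : ℕ) (hn : 2 ≤ n)
    (hint : ∫ y in Ioo (0:ℝ) 1, y ^ (1/(n:ℝ)) = (n:ℝ)/((n:ℝ)+1)) :
    ∫ x in Set.univ.pi fun _ : Fin n => Ioo (0:ℝ) 1, (∏ i, x i) ^ (1/(n:ℝ))
      = ((n:ℝ)/((n:ℝ)+1))^n := by
  set S := Set.univ.pi fun _ : Fin n => Ioo (0:ℝ) 1 with hSdef
  have hS : MeasurableSet S := MeasurableSet.univ_pi fun _ => measurableSet_Ioo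
  have h1 : ∫ x in S, (∏ i, x i) ^ (1/(n:ℝ)) = ∫ x in S, ∏ i, (x i) ^ (1/(n:ℝ)) :=
    setIntegral_congr_fun hS fun x hx =>
      (Real.finset_prod_rpow _ _ (fun i _ => (hx i (Set.mem_univ i)).1.le) _).symm
  rw [h1, ← integral_indicator hS]
  have h2 : (S.indicator fun x => ∏ i, (x i) ^ (1/(n:ℝ)))
      = fun x => ∏ i, (Ioo (0:ℝ) 1).indicator (fun y => y ^ (1/(n:ℝ))) (x i) := by
    funext x
    by_cases hx : x ∈ S
    · rw [Set.indicator_of_mem hx]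
      exact Finset.prod_congr rfl fun i _ =>
        (Set.indicator_of_mem (s := Ioo (0:ℝ) 1) (hx i (Set.mem_univ i)) (fun y => y ^ (1/(n:ℝ)))).symm
    · rw [Set.indicator_of_notMem hx]
      rw [hSdef, Set.mem_pi] at hx
      push_neg at hx
      obtain ⟨i, -, hi⟩ := hx
      exact (Finset.prod_eq_zero (Finset.mem_univ i) (Set.indicator_of_notMem hi _)).symm
  rw [h2, integral_fintype_prod_volume_eq_pow (ι := Fin n) ((Ioo (0:ℝ) 1).indicator fun y => y ^ (1/(n:ℝ))),
    integral_indicator measurableSet_Ioo, hint, Fintype.card_fin]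

private lemma min_int (n : ℕ) (hn : 2 ≤ n) (H : (Finset.univ : Finset (Fin n)).Nonempty) :
    ∫ x in Set.univ.pi fun _ : Fin n => Ioo (0:ℝ) 1, Finset.univ.inf' H x
      = 1/((n:ℝ)+1) := by
  have hn0 : 0 < n := by omega
  set S := Set.univ.pi fun _ : Fin n => Ioo (0:ℝ) 1 with hSdef
  have hS : MeasurableSet S := MeasurableSet.univ_pi fun _ => measurableSet_Ioo
  set μ := (volume : Measure (Fin n → ℝ)).restrict S with hμ
  have hSvol : μ Set.univ = 1 := by
    rw [hμ, Measure.restrict_apply_univ, hSdef, volume_pi_pi]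
    simp [Real.volume_Ioo]
  haveI : IsProbabilityMeasure μ := ⟨hSvol⟩
  set f : (Fin n → ℝ) → ℝ := fun x => Finset.univ.inf' H x with hf
  have hmeas : Measurable f := measurable_finset_inf' H
  have hmem : ∀ᵐ x ∂μ, x ∈ S := ae_restrict_mem hS
  have f_nn : 0 ≤ᵐ[μ] f := hmem.mono fun x hx =>
    Finset.le_inf' H _ fun i _ => (hx i (Set.mem_univ i)).1.le
  have f_int : Integrable f μ := by
    refine Integrable.mono' (integrable_const (1:ℝ)) hmeas.aestronglyMeasurable ?_
    refine hmem.mono fun x hx => ?_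
    have h0 : 0 ≤ f x := Finset.le_inf' H _ fun i _ => (hx i (Set.mem_univ i)).1.le
    have h1 : f x ≤ 1 := le_trans (Finset.inf'_le _ (Finset.mem_univ ⟨0, hn0⟩))
      (hx ⟨0, hn0⟩ (Set.mem_univ _)).2.le
    rw [Real.norm_eq_abs, abs_le]; exact ⟨by linarith, h1⟩
  rw [show (∫ x in S, f x) = ∫ x, f x ∂μ from rfl,
    f_int.integral_eq_integral_meas_lt f_nn]
  have key : EqOn (fun t => μ.real {a | t < f a})
      ((Ioc (0:ℝ) 1).indicator fun t => (1-t)^n) (Ioi 0) := by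
    intro t ht
    have hset : {a : Fin n → ℝ | t < f a} = Set.univ.pi fun _ : Fin n => Ioi t := by
      ext x
      simp [hf, Finset.lt_inf'_iff, Set.mem_pi]
    have hμt : μ {a | t < f a} = ENNReal.ofReal (1 - t) ^ n := by
      rw [hset, hμ, hSdef, restrict_pi_eq n, Measure.pi_pi]
      have hone : (volume : Measure ℝ).restrict (Ioo 0 1) (Ioi t) = ENNReal.ofReal (1 - t) := by
        rw [Measure.restrict_apply measurableSet_Ioi]
        rcases le_or_gt 1 t with h1 | h1
        · have he : Ioi t ∩ Ioo (0:ℝ) 1 = ∅ := by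
            ext y; simp only [mem_inter_iff, mem_Ioi, mem_Ioo, mem_empty_iff_false, iff_false]
            rintro ⟨hy1, hy2, hy3⟩; linarith
          rw [he, measure_empty, Eq.comm, ENNReal.ofReal_eq_zero]
          linarith
        · have he : Ioi t ∩ Ioo (0:ℝ) 1 = Ioo t 1 := by
            ext y; simp only [mem_inter_iff, mem_Ioi, mem_Ioo]
            constructor
            · rintro ⟨hy1, _, hy3⟩; exact ⟨hy1, hy3⟩
            · rintro ⟨hy1, hy2⟩; exact ⟨hy1, lt_trans (mem_Ioi.mp ht) hy1, hy2⟩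
          rw [he, Real.volume_Ioo]
      rw [hone, Finset.prod_const, Finset.card_univ, Fintype.card_fin]
    show (μ {a | t < f a}).toReal = (Ioc (0:ℝ) 1).indicator (fun t => (1-t)^n) t
    rw [hμt]
    simp only [ENNReal.toReal_pow, ENNReal.toReal_ofReal']
    rcases le_or_gt t 1 with h1 | h1
    · have hmemIoc : t ∈ Ioc (0:ℝ) 1 := ⟨mem_Ioi.mp ht, h1⟩
      rw [Set.indicator_of_mem hmemIoc, max_eq_left (by linarith)]
    · rw [Set.indicator_of_notMem (by simp [mem_Ioc]; intro _; linarith),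
        max_eq_right (by linarith), zero_pow (by omega)]
  rw [setIntegral_congr_fun measurableSet_Ioi key,
    setIntegral_indicator measurableSet_Ioc]
  have hii : Ioi (0:ℝ) ∩ Ioc 0 1 = Ioc (0:ℝ) 1 := by
    rw [Set.inter_eq_right]; exact fun y hy => hy.1
  rw [hii, ← intervalIntegral.integral_of_le zero_le_one,
    intervalIntegral.integral_comp_sub_left (fun s => s ^ n) 1]
  simp [integral_pow]

private lemma max_int (n : ℕ) (hn : 2 ≤ n) (H : (Finset.univ : Finset (Fin n)).Nonempty) :
    ∫ x in Set.univ.pi fun _ : Fin n => Ioo (0:ℝ) 1, Finset.univ.sup' H x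
      = (n:ℝ)/((n:ℝ)+1) := by
  have hn0 : 0 < n := by omega
  have hnr : (0:ℝ) < n := by exact_mod_cast hn0
  set S := Set.univ.pi fun _ : Fin n => Ioo (0:ℝ) 1 with hSdef
  have hS : MeasurableSet S := MeasurableSet.univ_pi fun _ => measurableSet_Ioo
  set μ := (volume : Measure (Fin n → ℝ)).restrict S with hμ
  have hSvol : μ Set.univ = 1 := by
    rw [hμ, Measure.restrict_apply_univ, hSdef, volume_pi_pi]
    simp [Real.volume_Ioo]
  haveI : IsProbabilityMeasure μ := ⟨hSvol⟩
  set f : (Fin n → ℝ) → ℝ := fun x => Finset.univ.sup' H x with hf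
  have hmeas : Measurable f := measurable_finset_sup' H
  have hmem : ∀ᵐ x ∂μ, x ∈ S := ae_restrict_mem hS
  have f_nn : 0 ≤ᵐ[μ] f := hmem.mono fun x hx =>
    le_trans (hx ⟨0, hn0⟩ (Set.mem_univ _)).1.le
      (Finset.le_sup' _ (Finset.mem_univ (⟨0, hn0⟩ : Fin n)))
  have f_int : Integrable f μ := by
    refine Integrable.mono' (integrable_const (1:ℝ)) hmeas.aestronglyMeasurable ?_
    refine hmem.mono fun x hx => ?_
    have h0 : 0 ≤ f x := le_trans (hx ⟨0, hn0⟩ (Set.mem_univ _)).1.le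
      (Finset.le_sup' _ (Finset.mem_univ (⟨0, hn0⟩ : Fin n)))
    have h1 : f x ≤ 1 := Finset.sup'_le H _ fun i _ => (hx i (Set.mem_univ i)).2.le
    rw [Real.norm_eq_abs, abs_le]; exact ⟨by linarith, h1⟩
  rw [show (∫ x in S, f x) = ∫ x, f x ∂μ from rfl,
    f_int.integral_eq_integral_meas_lt f_nn]
  have key : EqOn (fun t => μ.real {a | t < f a})
      ((Ioc (0:ℝ) 1).indicator fun t => 1 - t^n) (Ioi 0) := by
    intro t ht
    have ht0 : (0:ℝ) < t := mem_Ioi.mp ht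
    have hset : {a : Fin n → ℝ | t < f a} = (Set.univ.pi fun _ : Fin n => Iic t)ᶜ := by
      ext x
      simp only [mem_setOf_eq, hf, Finset.lt_sup'_iff, mem_compl_iff, Set.mem_pi,
        Set.mem_univ, true_implies, mem_Iic, not_forall, not_le, Finset.mem_univ,
        true_and]
    have hpi : MeasurableSet (Set.univ.pi fun _ : Fin n => Iic t) :=
      MeasurableSet.univ_pi fun _ => measurableSet_Iic
    have hval : (volume : Measure ℝ).restrict (Ioo 0 1) (Iic t)
        = ENNReal.ofReal (min t 1) := by
      rw [Measure.restrict_apply measurableSet_Iic]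
      rcases le_or_gt t 1 with h1 | h1
      · rw [min_eq_left h1]
        refine le_antisymm ?_ ?_
        · have hsub : Iic t ∩ Ioo (0:ℝ) 1 ⊆ Ioc 0 t := fun y hy => ⟨hy.2.1, hy.1⟩
          calc volume (Iic t ∩ Ioo (0:ℝ) 1) ≤ volume (Ioc (0:ℝ) t) := measure_mono hsub
            _ = ENNReal.ofReal t := by rw [Real.volume_Ioc, sub_zero]
        · have hsub : Ioo (0:ℝ) t ⊆ Iic t ∩ Ioo 0 1 := fun y hy =>
            ⟨hy.2.le, hy.1, lt_of_lt_of_le hy.2 h1⟩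
          calc ENNReal.ofReal t = volume (Ioo (0:ℝ) t) := by rw [Real.volume_Ioo, sub_zero]
            _ ≤ _ := measure_mono hsub
      · rw [min_eq_right h1.le]
        have hsub : Iic t ∩ Ioo (0:ℝ) 1 = Ioo 0 1 := by
          rw [Set.inter_eq_right]
          exact fun y hy => le_trans hy.2.le h1.le
        rw [hsub, Real.volume_Ioo, sub_zero]
    have hμt : μ {a | t < f a} = 1 - ENNReal.ofReal (min t 1) ^ n := by
      rw [hset, measure_compl hpi (measure_ne_top μ _), hSvol, hμ, hSdef, restrict_pi_eq n,
        Measure.pi_pi, hval, Finset.prod_const, Finset.card_univ, Fintype.card_fin]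
    show (μ {a | t < f a}).toReal = (Ioc (0:ℝ) 1).indicator (fun t => 1 - t^n) t
    rw [hμt]
    rcases le_or_gt t 1 with h1 | h1
    · have hmemIoc : t ∈ Ioc (0:ℝ) 1 := ⟨ht0, h1⟩
      have hle : t ^ n ≤ 1 := pow_le_one₀ ht0.le h1
      rw [Set.indicator_of_mem hmemIoc, min_eq_left h1,
        ← ENNReal.ofReal_pow ht0.le, ← ENNReal.ofReal_one,
        ← ENNReal.ofReal_sub _ (by positivity),
        ENNReal.toReal_ofReal (by linarith)]
    · rw [Set.indicator_of_notMem (by simp [mem_Ioc]; intro _; linarith),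
        min_eq_right h1.le, ENNReal.ofReal_one, one_pow, tsub_self]
      simp
  rw [setIntegral_congr_fun measurableSet_Ioi key,
    setIntegral_indicator measurableSet_Ioc]
  have hii : Ioi (0:ℝ) ∩ Ioc 0 1 = Ioc (0:ℝ) 1 := by
    rw [Set.inter_eq_right]; exact fun y hy => hy.1
  rw [hii, ← intervalIntegral.integral_of_le zero_le_one,
    intervalIntegral.integral_sub intervalIntegrable_const (intervalIntegral.intervalIntegrable_pow n),
    intervalIntegral.integral_const, integral_pow]
  field_simp
  rw [zero_pow (Nat.succ_ne_zero n), smul_eq_mul, one_pow]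
  ring


/-- For `n ≥ 2`, the global orness value over `[0,1]^n` of the geometric mean
`G(x) = (∏ᵢ xᵢ)^{1/n}`, namely `(Ḡ − M̄in)/(M̄ax − M̄in)`, equals
`−1/(n−1) + ((n+1)/(n−1))(n/(n+1))ⁿ`. -/
theorem global_orness_geometric_mean (n : ℕ) (hn : 2 ≤ n) :
    ((∫ x in Set.univ.pi fun _ : Fin n => Set.Ioo (0 : ℝ) 1,
          (∏ i : Fin n, x i) ^ (1 / (n : ℝ))) -
        (∫ x in Set.univ.pi fun _ : Fin n => Set.Ioo (0 : ℝ) 1,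
          Finset.univ.inf' ⟨⟨0, by omega⟩, Finset.mem_univ _⟩ x)) /
      ((∫ x in Set.univ.pi fun _ : Fin n => Set.Ioo (0 : ℝ) 1,
          Finset.univ.sup' ⟨⟨0, by omega⟩, Finset.mem_univ _⟩ x) -
        (∫ x in Set.univ.pi fun _ : Fin n => Set.Ioo (0 : ℝ) 1,
          Finset.univ.inf' ⟨⟨0, by omega⟩, Finset.mem_univ _⟩ x))
      = -(1 / ((n : ℝ) - 1)) + ((n : ℝ) + 1) / ((n : ℝ) - 1) * ((n : ℝ) / ((n : ℝ) + 1)) ^ n := by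
  have hgeo := geo_int n hn (int_rpow n hn)
  have hmin := min_int n hn ⟨⟨0, by omega⟩, Finset.mem_univ _⟩
  have hmax := max_int n hn ⟨⟨0, by omega⟩, Finset.mem_univ _⟩
  rw [hgeo, hmin, hmax]
  have hnr : (2:ℝ) ≤ n := by exact_mod_cast hn
  have h1 : (n:ℝ) + 1 ≠ 0 := by linarith
  have h2 : (n:ℝ) - 1 ≠ 0 := by intro h; linarith
  set A := ((n:ℝ) / ((n:ℝ) + 1)) ^ n with hA
  have hden : (n:ℝ)/((n:ℝ)+1) - 1/((n:ℝ)+1) ≠ 0 := by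
    rw [div_sub_div_same]
    exact div_ne_zero h2 h1
  rw [div_eq_iff hden]
  field_simp
  ring
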